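/- Assume the sharp quantitative isoperimetric inequality λ(E) ≤ C_F(N)√δ(E) holds for all sets of finite perimeter in ℝ^N. Then for every N ≥ 2 and every D > 0 there exists a constant C(N,D) (one may take C(N,D) = 2^N C_F(N) C₃^N 3^{N(N−1)/2} D^N for a dimensional constant C₃) such that every set E ⊆ ℝ^N of finite perimeter with 0 < |E| < ∞ and essential diameter at most D|E|^{1/N} satisfies λ₀(E) ≤ C(N,D)√δ(E). -/

import Mathlib

open MeasureTheory Metric Set ENNReal

noncomputable section

abbrev En (N : ℕ) := EuclideanSpace ℝ (Fin N)

/-- The volume of the unit ball in `ℝ^N`. -/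
def omegaB (N : ℕ) : ℝ := (volume (Metric.ball (0 : En N) 1)).toReal

/-- The divergence of a vector field on `ℝ^N`. -/
def divg {N : ℕ} (φ : En N → En N) (x : En N) : ℝ :=
  ∑ i, fderiv ℝ φ x (EuclideanSpace.single i (1 : ℝ)) i

/-- The set of candidate values in the sup defining the distributional perimeter of `E`. -/
def perSet {N : ℕ} (E : Set (En N)) : Set ℝ :=
  {p | ∃ φ : En N → En N, ContDiff ℝ 1 φ ∧ HasCompactSupport φ ∧
    (∀ x, ‖φ x‖ ≤ 1) ∧ p = ∫ x in E, divg φ x}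

/-- The distributional (De Giorgi) perimeter of `E`. -/
def perimeter {N : ℕ} (E : Set (En N)) : ℝ := sSup (perSet E)

/-- `E` has finite perimeter. -/
def HasFinitePerimeter {N : ℕ} (E : Set (En N)) : Prop := BddAbove (perSet E)

/-- The essential diameter of `E`. -/
def essDiam {N : ℕ} (E : Set (En N)) : ℝ≥0∞ :=
  sInf {d : ℝ≥0∞ |
    (volume.prod volume) {p : En N × En N | p.1 ∈ E ∧ p.2 ∈ E ∧ d < edist p.1 p.2} = 0}

/-- The barycenter of `E`. -/
def bary {N : ℕ} (E : Set (En N)) : En N := ((volume E).toReal)⁻¹ • ∫ x in E, x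

/-- The radius of the ball having the same volume as `E`. -/
def ballRad {N : ℕ} (E : Set (En N)) : ℝ := ((volume E).toReal / omegaB N) ^ (1 / (N : ℝ))

/-- The barycentric asymmetry `λ₀(E)`. -/
def lam0 {N : ℕ} (E : Set (En N)) : ℝ :=
  (volume (symmDiff E (Metric.ball (bary E) (ballRad E)))).toReal / (volume E).toReal

/-- The Fraenkel asymmetry `λ(E)`. -/
def fraenkel {N : ℕ} (E : Set (En N)) : ℝ :=
  ⨅ y : En N, (volume (symmDiff E (Metric.ball y (ballRad E)))).toReal / (volume E).toReal

/-- The isoperimetric deficit `δ(E)`. -/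
def deficit {N : ℕ} (E : Set (En N)) : ℝ :=
  (perimeter E - perimeter (Metric.ball (0 : En N) (ballRad E))) /
    perimeter (Metric.ball (0 : En N) (ballRad E))

/-- Measure-theoretic connectedness. -/
def MConnected {N : ℕ} (E : Set (En N)) : Prop :=
  ∀ F : Set (En N), MeasurableSet F → F ⊆ E → 0 < volume F → volume F < volume E →
    perimeter E < perimeter F + perimeter (E \ F)

variable {N : ℕ}

lemma finrank_En (hN : 1 ≤ N) : Module.finrank ℝ (En N) = N := by
  simp [finrank_euclideanSpace]

lemma omegaB_pos (hN : 1 ≤ N) : 0 < omegaB N := by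
  have : Nontrivial (En N) := by
    have : 1 ≤ Module.finrank ℝ (En N) := by rw [finrank_En hN]; exact hN
    exact Module.nontrivial_of_finrank_pos this
  exact ENNReal.toReal_pos (measure_ball_pos volume 0 one_pos).ne' measure_ball_lt_top.ne

lemma vol_ball_eq (hN : 1 ≤ N) (c : En N) {r : ℝ} (hr : 0 ≤ r) :
    volume (ball c r) = ENNReal.ofReal (r ^ N * omegaB N) := by
  have : Nontrivial (En N) := by
    have : 1 ≤ Module.finrank ℝ (En N) := by rw [finrank_En hN]; exact hN
    exact Module.nontrivial_of_finrank_pos this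
  rw [Measure.addHaar_ball volume c hr, finrank_En hN, ENNReal.ofReal_mul (by positivity),
    omegaB, ENNReal.ofReal_toReal measure_ball_lt_top.ne]

lemma vol_closedBall_eq (hN : 1 ≤ N) (c : En N) {r : ℝ} (hr : 0 ≤ r) :
    volume (closedBall c r) = ENNReal.ofReal (r ^ N * omegaB N) := by
  rw [Measure.addHaar_closedBall volume c hr, finrank_En hN, ENNReal.ofReal_mul (by positivity),
    omegaB, ENNReal.ofReal_toReal measure_ball_lt_top.ne]

lemma omegaB_nonneg : 0 ≤ omegaB N := ENNReal.toReal_nonneg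

lemma ballRad_nonneg (E : Set (En N)) : 0 ≤ ballRad E :=
  Real.rpow_nonneg (div_nonneg ENNReal.toReal_nonneg omegaB_nonneg) _

lemma ballRad_pow (hN : 1 ≤ N) (E : Set (En N)) (hE : 0 < volume E) (hE' : volume E ≠ ⊤) :
    (ballRad E) ^ N * omegaB N = (volume E).toReal := by
  have hm : 0 < (volume E).toReal := ENNReal.toReal_pos hE.ne' hE'
  have hω := omegaB_pos hN
  have hNn : (N : ℝ) ≠ 0 := by positivity
  have : (ballRad E) ^ N = (volume E).toReal / omegaB N := by
    rw [ballRad, ← Real.rpow_natCast (_ ^ (1 / (N:ℝ))) N, ← Real.rpow_mul (by positivity),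
      one_div, inv_mul_cancel₀ hNn, Real.rpow_one]
  rw [this]; field_simp

lemma vol_ball_ballRad (hN : 1 ≤ N) (E : Set (En N)) (hE : 0 < volume E) (hE' : volume E ≠ ⊤)
    (c : En N) : volume (ball c (ballRad E)) = volume E := by
  rw [vol_ball_eq hN c (ballRad_nonneg E), ballRad_pow hN E hE hE',
    ENNReal.ofReal_toReal hE']


lemma essDiam_mem {E : Set (En N)} (hfin : essDiam E ≠ ⊤) :
    (volume.prod volume)
      {p : En N × En N | p.1 ∈ E ∧ p.2 ∈ E ∧ essDiam E < edist p.1 p.2} = 0 := by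
  set S := {d : ℝ≥0∞ |
    (volume.prod volume) {p : En N × En N | p.1 ∈ E ∧ p.2 ∈ E ∧ d < edist p.1 p.2} = 0}
  have hS : ∀ n : ℕ, (volume.prod volume)
      {p : En N × En N | p.1 ∈ E ∧ p.2 ∈ E ∧ essDiam E + (n : ℝ≥0∞)⁻¹ < edist p.1 p.2} = 0 := by
    intro n
    have hlt : essDiam E < essDiam E + (n : ℝ≥0∞)⁻¹ :=
      ENNReal.lt_add_right hfin (ENNReal.inv_ne_zero.2 (ENNReal.natCast_ne_top n))
    obtain ⟨d, hd, hdlt⟩ := sInf_lt_iff.1 hlt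
    refine measure_mono_null ?_ hd
    intro p hp
    exact ⟨hp.1, hp.2.1, hdlt.trans hp.2.2⟩
  have hU : {p : En N × En N | p.1 ∈ E ∧ p.2 ∈ E ∧ essDiam E < edist p.1 p.2} ⊆
      ⋃ n : ℕ, {p : En N × En N | p.1 ∈ E ∧ p.2 ∈ E ∧ essDiam E + (n : ℝ≥0∞)⁻¹ < edist p.1 p.2} := by
    intro p hp
    obtain ⟨r, hr, hlt⟩ := ENNReal.lt_iff_exists_add_pos_lt.1 hp.2.2
    obtain ⟨n, hn⟩ := ENNReal.exists_inv_nat_lt (a := (r : ℝ≥0∞)) (by exact_mod_cast hr.ne')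
    exact Set.mem_iUnion.2 ⟨n, hp.1, hp.2.1, lt_of_le_of_lt (add_le_add le_rfl hn.le) hlt⟩
  exact measure_mono_null hU (by rw [measure_iUnion_null_iff]; exact fun n => hS n)

lemma good_ae {E : Set (En N)} {d : ℝ≥0∞} (hd : essDiam E ≤ d) (hfin : d ≠ ⊤) :
    ∀ᵐ x, x ∈ E → volume {y | y ∈ E ∧ d < edist x y} = 0 := by
  have h0 : (volume.prod volume)
      {p : En N × En N | p.1 ∈ E ∧ p.2 ∈ E ∧ d < edist p.1 p.2} = 0 := by
    refine measure_mono_null ?_ (essDiam_mem (lt_of_le_of_lt hd (lt_top_iff_ne_top.2 hfin)).ne)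
    intro p hp
    exact ⟨hp.1, hp.2.1, lt_of_le_of_lt hd hp.2.2⟩
  filter_upwards [MeasureTheory.Measure.measure_ae_null_of_prod_null h0] with x hx hxE
  rw [Pi.zero_apply] at hx
  refine measure_mono_null ?_ hx
  intro y hy
  exact ⟨hxE, hy.1, hy.2⟩

lemma exists_good {E S : Set (En N)} {d : ℝ≥0∞} (hd : essDiam E ≤ d) (hfin : d ≠ ⊤)
    (hS : S ⊆ E) (hSpos : 0 < volume S) :
    ∃ x ∈ S, volume {y | y ∈ E ∧ d < edist x y} = 0 := by
  obtain ⟨T, hT0, hT⟩ : ∃ T, volume T = 0 ∧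
      {x | ¬ (x ∈ E → volume {y | y ∈ E ∧ d < edist x y} = 0)} ⊆ T := by
    have := good_ae (E := E) hd hfin
    rw [MeasureTheory.ae_iff] at this
    exact ⟨_, this, fun x hx => hx⟩
  have : 0 < volume (S \ T) := by
    rw [measure_diff_null hT0]; exact hSpos
  obtain ⟨x, hxS, hxT⟩ := nonempty_of_measure_ne_zero this.ne'
  refine ⟨x, hxS, ?_⟩
  by_contra h
  exact hxT (hT (fun h' => h (h' (hS hxS))))

lemma ae_dist_le {E : Set (En N)} {x : En N} {d : ℝ} (hd : 0 ≤ d)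
    (h : volume {y | y ∈ E ∧ ENNReal.ofReal d < edist x y} = 0) :
    ∀ᵐ y, y ∈ E → dist x y ≤ d := by
  have : ∀ᵐ y, ¬ (y ∈ E ∧ ENNReal.ofReal d < edist x y) := by
    rw [MeasureTheory.ae_iff]; simpa using h
  filter_upwards [this] with y hy hyE
  by_contra hlt
  push_neg at hlt
  exact hy ⟨hyE, by rw [edist_dist]; exact (ENNReal.ofReal_lt_ofReal_iff_of_nonneg hd).2 hlt⟩

lemma integrableOn_id_ball {c : En N} {r : ℝ} : IntegrableOn (fun x => x) (ball c r) volume :=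
  ((continuous_id.continuousOn).integrableOn_compact (isCompact_closedBall c r)).mono_set
    ball_subset_closedBall

lemma integral_ball_center_sym {r : ℝ} : ∫ x in ball (0 : En N) r, x = 0 := by
  have h1 : ∫ x in ball (0 : En N) r, x = ∫ x, (ball (0 : En N) r).indicator (fun y => y) x :=
    (integral_indicator measurableSet_ball).symm
  have h2 : ∀ x : En N, (ball (0 : En N) r).indicator (fun y => y) (-x)
      = - (ball (0 : En N) r).indicator (fun y => y) x := by
    intro x
    by_cases hx : x ∈ ball (0 : En N) r
    · rw [Set.indicator_of_mem hx, Set.indicator_of_mem (by simpa using hx)]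
    · rw [Set.indicator_of_notMem hx, Set.indicator_of_notMem (by simpa using hx), neg_zero]
  have h3 := integral_neg_eq_self ((ball (0 : En N) r).indicator (fun y => y)) (volume : Measure (En N))
  rw [h1]
  have : ∫ x, (ball (0 : En N) r).indicator (fun y => y) x
      = - ∫ x, (ball (0 : En N) r).indicator (fun y => y) x := by
    conv_lhs => rw [← h3]
    simp_rw [h2]
    rw [integral_neg]
  have h4 : (2:ℝ) • (∫ x, (ball (0 : En N) r).indicator (fun y => y) x) = 0 := by
    rw [two_smul]
    nth_rewrite 2 [this]
    exact add_neg_cancel _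
  exact (smul_eq_zero.1 h4).resolve_left (by norm_num)

lemma integral_ball_id (c : En N) (r : ℝ) :
    ∫ x in ball c r, x = (volume (ball c r)).toReal • c := by
  have hsub : ∫ x in ball c r, (x - c) = 0 := by
    have h1 : ∫ x in ball c r, (x - c)
        = ∫ x, (ball c r).indicator (fun y => y - c) x :=
      (integral_indicator measurableSet_ball).symm
    have h2 : ∀ x : En N, (ball c r).indicator (fun y => y - c) (x + c)
        = (ball (0 : En N) r).indicator (fun y => y) x := by
      intro x
      by_cases hx : x ∈ ball (0 : En N) r
      · rw [Set.indicator_of_mem hx, Set.indicator_of_mem (by simpa [dist_eq_norm] using hx)]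
        simp
      · rw [Set.indicator_of_notMem hx, Set.indicator_of_notMem (by simpa [dist_eq_norm] using hx)]
    have h3 := MeasureTheory.integral_add_right_eq_self
      ((ball c r).indicator (fun y => y - c)) c (μ := (volume : Measure (En N)))
    rw [h1, ← h3]
    simp_rw [h2]
    rw [integral_indicator measurableSet_ball, integral_ball_center_sym]
  have hint : IntegrableOn (fun x : En N => x - c) (ball c r) volume :=
    integrableOn_id_ball.sub (integrableOn_const measure_ball_lt_top.ne)
  have : ∫ x in ball c r, x = (∫ x in ball c r, (x - c)) + ∫ x in ball c r, c := by
    rw [← integral_add hint (integrableOn_const measure_ball_lt_top.ne)]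
    simp
  rw [this, hsub, zero_add, setIntegral_const, Measure.real]

lemma pow_sub_pow_le' {a c : ℝ} (h0 : 0 ≤ c) (hca : c ≤ a) (n : ℕ) :
    a ^ n - c ^ n ≤ n * a ^ (n - 1) * (a - c) := by
  have ha : 0 ≤ a := h0.trans hca
  have := geom_sum₂_mul a c n
  rw [← this]
  have hsum : (∑ i ∈ Finset.range n, a ^ i * c ^ (n - 1 - i)) ≤ n * a ^ (n - 1) := by
    calc (∑ i ∈ Finset.range n, a ^ i * c ^ (n - 1 - i))
        ≤ ∑ i ∈ Finset.range n, a ^ (n - 1) := by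
          refine Finset.sum_le_sum fun i hi => ?_
          have hi' : i < n := Finset.mem_range.1 hi
          calc a ^ i * c ^ (n - 1 - i) ≤ a ^ i * a ^ (n - 1 - i) := by
                exact mul_le_mul_of_nonneg_left (pow_le_pow_left₀ h0 hca _) (pow_nonneg ha i)
            _ = a ^ (i + (n - 1 - i)) := (pow_add a i (n-1-i)).symm
            _ ≤ a ^ (n - 1) := by
                rcases le_or_gt a 1 with h1 | h1
                · exact pow_le_pow_of_le_one ha h1 (by omega)
                · exact pow_le_pow_right₀ h1.le (by omega)
      _ = n * a ^ (n - 1) := by rw [Finset.sum_const, Finset.card_range, nsmul_eq_mul]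
  exact mul_le_mul_of_nonneg_right hsum (by linarith)

lemma ball_symmDiff_le (hN : 1 ≤ N) (y c : En N) {r : ℝ} (hr : 0 ≤ r) :
    (volume (symmDiff (ball y r) (ball c r))).toReal
      ≤ 2 * N * dist y c * (r + dist y c) ^ (N - 1) * omegaB N := by
  set t := dist y c with ht
  have ht0 : 0 ≤ t := dist_nonneg
  set s := max (r - t) 0 with hs
  have hs0 : 0 ≤ s := le_max_right _ _
  have hω := omegaB_nonneg (N := N)
  have hsle : s ≤ r := max_le (by linarith) hr
  have hsr : s ≤ r + t := by
    rcases le_total (r - t) 0 with h | h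
    · rw [hs, max_eq_right h]; linarith
    · rw [hs, max_eq_left h]; linarith
  have hsub : symmDiff (ball y r) (ball c r) ⊆ closedBall c (r + t) \ ball c s := by
    intro p hp
    rcases hp with ⟨hp1, hp2⟩ | ⟨hp1, hp2⟩
    · -- p ∈ ball y r, p ∉ ball c r
      simp only [mem_ball, not_lt] at hp1 hp2
      constructor
      · rw [mem_closedBall]
        calc dist p c ≤ dist p y + dist y c := dist_triangle p y c
          _ ≤ r + t := by rw [ht]; exact add_le_add hp1.le le_rfl
      · simp only [mem_ball, not_lt]
        exact hsle.trans hp2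
    · -- p ∈ ball c r, p ∉ ball y r
      simp only [mem_ball, not_lt] at hp1 hp2
      constructor
      · rw [mem_closedBall]; calc dist p c ≤ r := hp1.le
          _ ≤ r + t := by linarith
      · simp only [mem_ball, not_lt]
        rcases le_total (r - t) 0 with h | h
        · rw [hs, max_eq_right h]; exact dist_nonneg
        · rw [hs, max_eq_left h]
          have : dist p y ≤ dist p c + dist c y := dist_triangle p c y
          have hcy : dist c y = t := by rw [ht, dist_comm]
          linarith [hp2]
  have hmono : volume (symmDiff (ball y r) (ball c r)) ≤ volume (closedBall c (r + t) \ ball c s) :=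
    measure_mono hsub
  have hdiff : volume (closedBall c (r + t) \ ball c s)
      = volume (closedBall c (r + t)) - volume (ball c s) := by
    refine measure_diff (Set.Subset.trans ball_subset_closedBall
      (closedBall_subset_closedBall hsr)) measurableSet_ball.nullMeasurableSet
      measure_ball_lt_top.ne
  have hcb := vol_closedBall_eq hN c (by linarith : (0:ℝ) ≤ r + t)
  have hb := vol_ball_eq hN c hs0
  have key : (volume (symmDiff (ball y r) (ball c r))).toReal
      ≤ (r + t) ^ N * omegaB N - s ^ N * omegaB N := by
    have h1 : (volume (closedBall c (r + t) \ ball c s)).toReal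
        = (r + t) ^ N * omegaB N - s ^ N * omegaB N := by
      rw [hdiff, hcb, hb, ← ENNReal.ofReal_sub _ (mul_nonneg (pow_nonneg hs0 N) hω), ENNReal.toReal_ofReal]
      have : s ^ N ≤ (r + t) ^ N := pow_le_pow_left₀ hs0 hsr N
      nlinarith [this]
    rw [← h1]
    exact ENNReal.toReal_mono ((measure_mono (Set.diff_subset)).trans_lt measure_closedBall_lt_top).ne hmono
  refine key.trans ?_
  have hrt : (r + t) - s ≤ 2 * t := by
    rcases le_total (r - t) 0 with h | h
    · rw [hs, max_eq_right h]; linarith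
    · rw [hs, max_eq_left h]; linarith
  have hp := pow_sub_pow_le' hs0 hsr N
  have hpow : (r + t) ^ N - s ^ N ≤ N * (r + t) ^ (N - 1) * (2 * t) := by
    refine hp.trans ?_
    exact mul_le_mul_of_nonneg_left hrt (by positivity)
  nlinarith [hpow, pow_nonneg (by linarith : (0:ℝ) ≤ r + t) (N-1)]




section core

variable (hN : 1 ≤ N) {E : Set (En N)} (hE : MeasurableSet E)
  (hpos : 0 < volume E) (hfin : volume E ≠ ⊤) {d : ℝ} (hd : 0 ≤ d)
  (hdiam : essDiam E ≤ ENNReal.ofReal d)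

include hN hE hpos hfin hd hdiam

lemma integrableOn_id (S : Set (En N)) (hS : S ⊆ E) : IntegrableOn (fun x : En N => x) S volume := by
  obtain ⟨x₀, hx₀E, hx₀⟩ := exists_good hdiam ofReal_ne_top (le_refl E) hpos
  have hnull : volume (E \ closedBall x₀ d) = 0 := by
    refine measure_mono_null ?_ hx₀
    intro z hz
    refine ⟨hz.1, ?_⟩
    rw [edist_dist, dist_comm]
    have : d < dist z x₀ := by
      by_contra h
      exact hz.2 (mem_closedBall.2 (by push_neg at h; linarith [h]))
    exact (ENNReal.ofReal_lt_ofReal_iff_of_nonneg hd).2 this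
  have h1 : IntegrableOn (fun x : En N => x) (S ∩ closedBall x₀ d) volume :=
    ((continuous_id.continuousOn).integrableOn_compact (isCompact_closedBall x₀ d)).mono_set
      Set.inter_subset_right
  refine h1.congr_set_ae ?_ |>.mono_set (le_refl _)
  rw [MeasureTheory.ae_eq_set]
  constructor
  · refine measure_mono_null ?_ hnull
    intro z hz
    exact ⟨hS hz.1, fun h => hz.2 ⟨hz.1, h⟩⟩
  · simp [Set.diff_eq_empty.2 Set.inter_subset_left]

lemma bary_dist (y : En N) (hyE : volume (E ∩ ball y (ballRad E)) ≠ 0) :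
    dist (bary E) y ≤ (d + ballRad E) *
      ((volume (symmDiff E (ball y (ballRad E)))).toReal / (volume E).toReal) := by
  set r := ballRad E with hr
  set B := ball y r with hB
  set m := (volume E).toReal with hm
  have hm0 : 0 < m := ENNReal.toReal_pos hpos.ne' hfin
  have hr0 : 0 ≤ r := ballRad_nonneg E
  have hvolB : volume B = volume E := vol_ball_ballRad hN E hpos hfin y
  have hBfin : volume B ≠ ⊤ := by rw [hvolB]; exact hfin
  -- measure equalities
  have hEB : volume (E ∩ B) + volume (E \ B) = volume E := by
    rw [add_comm]; exact measure_diff_add_inter E measurableSet_ball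
  have hBE : volume (B ∩ E) + volume (B \ E) = volume B := by
    rw [add_comm]; exact measure_diff_add_inter B hE
  have hEBfin : volume (E \ B) ≠ ⊤ := (lt_of_le_of_lt (measure_mono Set.diff_subset)
    (lt_top_iff_ne_top.2 hfin)).ne
  have hBEfin : volume (B \ E) ≠ ⊤ := (lt_of_le_of_lt (measure_mono Set.diff_subset)
    (lt_top_iff_ne_top.2 hBfin)).ne
  have hinterfin : volume (E ∩ B) ≠ ⊤ := (lt_of_le_of_lt (measure_mono Set.inter_subset_left)
    (lt_top_iff_ne_top.2 hfin)).ne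
  have haeq : volume (E \ B) = volume (B \ E) := by
    have := hEB
    rw [Set.inter_comm] at hBE
    rw [← hvolB] at this
    have h2 := this.trans hBE.symm
    exact (ENNReal.add_right_inj hinterfin).1 h2
  set a1 := (volume (E \ B)).toReal with ha1
  set a2 := (volume (B \ E)).toReal with ha2
  have ha12 : a1 = a2 := by rw [ha1, ha2, haeq]
  have hsymm : (volume (symmDiff E B)).toReal = a1 + a2 := by
    rw [Set.symmDiff_def, measure_union (Disjoint.mono_left Set.diff_subset
      disjoint_sdiff_right) (measurableSet_ball.diff hE),
      ENNReal.toReal_add hEBfin hBEfin]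
  -- integrability
  have hintE : IntegrableOn (fun x : En N => x) E volume :=
    integrableOn_id hN hE hpos hfin hd hdiam E (le_refl E)
  have hintB : IntegrableOn (fun x : En N => x) B volume :=
    integrableOn_id_ball
  -- split integrals
  have hsplitE : ∫ x in E, x = (∫ x in E ∩ B, x) + ∫ x in E \ B, x :=
    (integral_inter_add_diff measurableSet_ball hintE).symm
  have hsplitB : ∫ x in B, x = (∫ x in E ∩ B, x) + ∫ x in B \ E, x := by
    rw [← integral_inter_add_diff hE hintB, Set.inter_comm]
  -- main identity
  have hbary : m • bary E = ∫ x in E, x := by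
    rw [bary, smul_smul, hm, mul_inv_cancel₀ hm0.ne', one_smul]
  have hBint : ∫ x in B, x = m • y := by
    rw [hB, integral_ball_id, hvolB, hm]
  have hkey : m • bary E - m • y = (∫ x in E \ B, x) - ∫ x in B \ E, x := by
    rw [hbary, ← hBint, hsplitE, hsplitB]; abel
  -- recenter
  have hshift1 : ∫ x in E \ B, x = (∫ x in E \ B, (x - y)) + a1 • y := by
    rw [integral_sub (hintE.mono_set Set.diff_subset)
      (integrableOn_const hEBfin), setIntegral_const, Measure.real]
    abel
  have hshift2 : ∫ x in B \ E, x = (∫ x in B \ E, (x - y)) + a2 • y := by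
    rw [integral_sub (hintB.mono_set Set.diff_subset)
      (integrableOn_const hBEfin), setIntegral_const, Measure.real]
    abel
  have hkey2 : m • (bary E - y) = (∫ x in E \ B, (x - y)) - ∫ x in B \ E, (x - y) := by
    rw [smul_sub, hkey, hshift1, hshift2, ha12]; abel
  -- norm bounds
  obtain ⟨x₁, hx₁, hx₁good⟩ := exists_good hdiam ofReal_ne_top
    (Set.inter_subset_left : E ∩ B ⊆ E) (pos_iff_ne_zero.2 hyE)
  have hx₁B : dist x₁ y < r := by have := hx₁.2; rwa [hB, mem_ball] at this
  have haeE : ∀ᵐ x, x ∈ E → ‖x - y‖ ≤ d + r := by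
    filter_upwards [ae_dist_le hd hx₁good] with x hx hxE
    have h1 : dist x₁ x ≤ d := hx hxE
    calc ‖x - y‖ = dist x y := (dist_eq_norm x y).symm
      _ ≤ dist x x₁ + dist x₁ y := dist_triangle x x₁ y
      _ ≤ d + r := by rw [dist_comm x x₁]; linarith
  have hbound1 : ‖∫ x in E \ B, (x - y)‖ ≤ (d + r) * a1 := by
    refine norm_setIntegral_le_of_norm_le_const_ae' (lt_top_iff_ne_top.2 hEBfin) ?_
    filter_upwards [haeE] with x hx hxEB
    exact hx hxEB.1
  have hbound2 : ‖∫ x in B \ E, (x - y)‖ ≤ r * a2 := by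
    refine norm_setIntegral_le_of_norm_le_const_ae' (lt_top_iff_ne_top.2 hBEfin) ?_
    refine Filter.Eventually.of_forall fun x hx => ?_
    have : dist x y < r := by have := hx.1; rwa [hB, mem_ball] at this
    rw [← dist_eq_norm]; linarith
  have hnorm : m * dist (bary E) y ≤ (d + r) * a1 + r * a2 := by
    have : ‖m • (bary E - y)‖ ≤ (d + r) * a1 + r * a2 := by
      rw [hkey2]
      exact (norm_sub_le _ _).trans (add_le_add hbound1 hbound2)
    rw [norm_smul, Real.norm_of_nonneg hm0.le, ← dist_eq_norm] at this
    exact this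
  have ha1n : 0 ≤ a1 := ENNReal.toReal_nonneg
  have hfinal : m * dist (bary E) y ≤ (d + r) * (a1 + a2) := by
    refine hnorm.trans ?_
    have : r * a2 ≤ (d + r) * a2 := mul_le_mul_of_nonneg_right (by linarith) ENNReal.toReal_nonneg
    linarith
  rw [hsymm] at *
  rw [div_eq_inv_mul, ← mul_assoc]
  calc dist (bary E) y = m⁻¹ * (m * dist (bary E) y) := by field_simp
    _ ≤ m⁻¹ * ((d + r) * (a1 + a2)) := by
        exact mul_le_mul_of_nonneg_left hfinal (by positivity)
    _ = (d + r) * m⁻¹ * (a1 + a2) := by ring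

lemma lamy_le_two (y : En N) :
    (volume (symmDiff E (ball y (ballRad E)))).toReal / (volume E).toReal ≤ 2 := by
  have hm0 : 0 < (volume E).toReal := ENNReal.toReal_pos hpos.ne' hfin
  have hvolB : volume (ball y (ballRad E)) = volume E := vol_ball_ballRad hN E hpos hfin y
  have h1 : volume (symmDiff E (ball y (ballRad E))) ≤ volume E + volume E := by
    rw [Set.symmDiff_def]
    refine (measure_union_le _ _).trans ?_
    exact add_le_add (measure_mono Set.diff_subset)
      ((measure_mono Set.diff_subset).trans (le_of_eq hvolB))
  have h2 : (volume (symmDiff E (ball y (ballRad E)))).toReal ≤ 2 * (volume E).toReal := by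
    have := ENNReal.toReal_mono (by
      rw [← two_mul]
      exact (ENNReal.mul_ne_top (by norm_num) hfin)) h1
    rwa [ENNReal.toReal_add hfin hfin, ← two_mul] at this
  rw [div_le_iff₀ hm0]; linarith

lemma lam0_le_y (y : En N) :
    lam0 E ≤ (1 + 2*N*(d + ballRad E)*(ballRad E + 2*(d + ballRad E))^(N-1) * omegaB N
        / (volume E).toReal) *
      ((volume (symmDiff E (ball y (ballRad E)))).toReal / (volume E).toReal) := by
  set r := ballRad E with hrdef
  set m := (volume E).toReal with hm
  set L := (volume (symmDiff E (ball y r))).toReal / m with hL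
  have hm0 : 0 < m := ENNReal.toReal_pos hpos.ne' hfin
  have hr0 : 0 ≤ r := ballRad_nonneg E
  have hω : 0 ≤ omegaB N := omegaB_nonneg
  have hL0 : 0 ≤ L := div_nonneg ENNReal.toReal_nonneg hm0.le
  have hL2 : L ≤ 2 := lamy_le_two hN hE hpos hfin hd hdiam y
  have hK0 : 0 ≤ 2*N*(d + r)*(r + 2*(d + r))^(N-1) * omegaB N / m := by positivity
  have hvolBy : volume (ball y r) = volume E := vol_ball_ballRad hN E hpos hfin y
  have hsymfin : ∀ c : En N, volume (symmDiff E (ball c r)) ≠ ⊤ := by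
    intro c
    have hle : volume (symmDiff E (ball c r)) ≤ volume E + volume (ball c r) := by
      rw [Set.symmDiff_def]
      exact (measure_union_le _ _).trans (add_le_add (measure_mono Set.diff_subset)
        (measure_mono Set.diff_subset))
    exact (hle.trans_lt (ENNReal.add_lt_top.2
      ⟨lt_top_iff_ne_top.2 hfin, measure_ball_lt_top⟩)).ne
  by_cases hc : volume (E ∩ ball y r) = 0
  · -- degenerate case : L = 2
    have hEB : volume (E ∩ ball y r) + volume (E \ ball y r) = volume E := by
      rw [add_comm]; exact measure_diff_add_inter E measurableSet_ball
    have hBE : volume (ball y r ∩ E) + volume (ball y r \ E) = volume E := by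
      rw [add_comm, measure_diff_add_inter _ hE, hvolBy]
    rw [hc, zero_add] at hEB
    rw [Set.inter_comm, hc, zero_add] at hBE
    have hLeq : L = 2 := by
      rw [hL, Set.symmDiff_def, measure_union (Disjoint.mono_left Set.diff_subset
        disjoint_sdiff_right) (measurableSet_ball.diff hE), hEB, hBE,
        ENNReal.toReal_add hfin hfin]
      field_simp
      ring
    have hlam0 : lam0 E ≤ 2 := lamy_le_two hN hE hpos hfin hd hdiam (bary E)
    rw [hLeq]
    nlinarith [hlam0, hK0]
  · -- main case
    have ht := bary_dist hN hE hpos hfin hd hdiam y hc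
    set t := dist (bary E) y with htdef
    have ht0 : 0 ≤ t := dist_nonneg
    have ht2 : t ≤ 2 * (d + r) := by
      calc t ≤ (d + r) * L := ht
        _ ≤ (d + r) * 2 := mul_le_mul_of_nonneg_left hL2 (by positivity)
        _ = 2 * (d + r) := by ring
    have htri : volume (symmDiff E (ball (bary E) r))
        ≤ volume (symmDiff E (ball y r)) + volume (symmDiff (ball y r) (ball (bary E) r)) :=
      (measure_mono (symmDiff_triangle E (ball y r) (ball (bary E) r))).trans
        (measure_union_le _ _)
    have hfin2 : volume (symmDiff (ball y r) (ball (bary E) r)) ≠ ⊤ := by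
      have hle : volume (symmDiff (ball y r) (ball (bary E) r))
          ≤ volume (ball y r) + volume (ball (bary E) r) := by
        rw [Set.symmDiff_def]
        exact (measure_union_le _ _).trans (add_le_add (measure_mono Set.diff_subset)
          (measure_mono Set.diff_subset))
      exact (hle.trans_lt (ENNReal.add_lt_top.2
        ⟨measure_ball_lt_top, measure_ball_lt_top⟩)).ne
    have htoR : (volume (symmDiff E (ball (bary E) r))).toReal
        ≤ (volume (symmDiff E (ball y r))).toReal
          + (volume (symmDiff (ball y r) (ball (bary E) r))).toReal := by
      have := ENNReal.toReal_mono (ENNReal.add_ne_top.2 ⟨hsymfin y, hfin2⟩) htri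
      rwa [ENNReal.toReal_add (hsymfin y) hfin2] at this
    have hballs : (volume (symmDiff (ball y r) (ball (bary E) r))).toReal
        ≤ 2 * N * t * (r + t) ^ (N - 1) * omegaB N := by
      have := ball_symmDiff_le hN y (bary E) hr0
      rwa [dist_comm y (bary E), ← htdef] at this
    have hpowb : (r + t) ^ (N-1) ≤ (r + 2*(d + r)) ^ (N-1) :=
      pow_le_pow_left₀ (by linarith) (by linarith) _
    have hchain : (volume (symmDiff (ball y r) (ball (bary E) r))).toReal
        ≤ 2 * N * ((d + r) * L) * (r + 2*(d + r)) ^ (N-1) * omegaB N := by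
      calc (volume (symmDiff (ball y r) (ball (bary E) r))).toReal
          ≤ 2 * N * t * (r + t) ^ (N - 1) * omegaB N := hballs
        _ ≤ 2 * N * t * (r + 2*(d+r)) ^ (N - 1) * omegaB N := by
            have h1 : (0:ℝ) ≤ 2 * N * t := by positivity
            exact mul_le_mul_of_nonneg_right (mul_le_mul_of_nonneg_left hpowb h1) hω
        _ ≤ 2 * N * ((d + r) * L) * (r + 2*(d + r)) ^ (N-1) * omegaB N := by
            have hb : (0:ℝ) ≤ (r + 2*(d+r)) ^ (N - 1) := by positivity
            have h2 : 2 * (N:ℝ) * t ≤ 2 * N * ((d + r) * L) := by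
              have := ht
              rw [← hrdef, ← hm, ← hL] at this
              nlinarith [this]
            exact mul_le_mul_of_nonneg_right (mul_le_mul_of_nonneg_right h2 hb) hω
    have : lam0 E = (volume (symmDiff E (ball (bary E) r))).toReal / m := rfl
    rw [this, div_le_iff₀ hm0]
    have hgoal : (volume (symmDiff E (ball (bary E) r))).toReal
        ≤ L * m + 2 * N * ((d + r) * L) * (r + 2*(d + r)) ^ (N-1) * omegaB N := by
      have hLm : (volume (symmDiff E (ball y r))).toReal = L * m := by
        rw [hL]; field_simp
      linarith [htoR, hchain]
    refine hgoal.trans (le_of_eq ?_)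
    field_simp

end core

section core2

variable (hN : 1 ≤ N) {E : Set (En N)} (hE : MeasurableSet E)
  (hpos : 0 < volume E) (hfin : volume E ≠ ⊤) {d : ℝ} (hd : 0 ≤ d)
  (hdiam : essDiam E ≤ ENNReal.ofReal d)

include hN hE hpos hfin hd hdiam

lemma exists_center : ∃ x₀ ∈ E, volume (E \ closedBall x₀ d) = 0 := by
  obtain ⟨x₀, hx₀E, hx₀⟩ := exists_good hdiam ofReal_ne_top (Set.Subset.refl E) hpos
  refine ⟨x₀, hx₀E, ?_⟩
  refine measure_mono_null ?_ hx₀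
  intro z hz
  refine ⟨hz.1, ?_⟩
  rw [edist_dist, dist_comm]
  have : d < dist z x₀ := by
    by_contra h
    exact hz.2 (mem_closedBall.2 (by push_neg at h; linarith [h]))
  exact (ENNReal.ofReal_lt_ofReal_iff_of_nonneg hd).2 this

lemma vol_le_diam_ball : (volume E).toReal ≤ d ^ N * omegaB N := by
  obtain ⟨x₀, hx₀E, hx₀⟩ := exists_center hN hE hpos hfin hd hdiam
  have h1 : volume E ≤ volume (closedBall x₀ d) := by
    have h2 : volume (E ∩ closedBall x₀ d) + volume (E \ closedBall x₀ d) = volume E :=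
      measure_inter_add_diff E measurableSet_closedBall
    rw [hx₀, add_zero] at h2
    rw [← h2]
    exact measure_mono Set.inter_subset_right
  rw [vol_closedBall_eq hN x₀ hd] at h1
  have := ENNReal.toReal_mono ofReal_ne_top h1
  rwa [ENNReal.toReal_ofReal (mul_nonneg (pow_nonneg hd N) omegaB_nonneg)] at this

end core2







set_option maxHeartbeats 1000000 in
/-- Main theorem. Assuming the sharp quantitative isoperimetric inequality,
for every `N ≥ 2` and `D > 0` there is a constant `C(N,D) = 2^N C_F(N) C₃^N 3^{N(N-1)/2} D^N`
such that every finite-perimeter set with essential diameter at most `D|E|^{1/N}` satisfies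
`λ₀(E) ≤ C(N,D) √δ(E)`. -/
theorem main_barycentric_quantitative {N : ℕ} (hN : 2 ≤ N) (CF : ℝ)
    (hQ : ∀ F : Set (En N), MeasurableSet F → HasFinitePerimeter F →
      0 < volume F → volume F ≠ ⊤ → fraenkel F ≤ CF * Real.sqrt (deficit F)) :
    ∃ C₃ : ℝ, 0 < C₃ ∧ ∀ D : ℝ, 0 < D → ∀ E : Set (En N), MeasurableSet E →
      HasFinitePerimeter E → 0 < volume E → volume E ≠ ⊤ →
      essDiam E ≤ ENNReal.ofReal (D * (volume E).toReal ^ (1 / (N : ℝ))) →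
      lam0 E ≤ 2 ^ N * CF * C₃ ^ N * 3 ^ (N * (N - 1) / 2) * D ^ N
        * Real.sqrt (deficit E) := by
  have hN1 : 1 ≤ N := le_trans (by norm_num) hN
  have hNne : (N : ℝ) ≠ 0 := by positivity
  set ω : ℝ := omegaB N with hωdef
  have hω0 : 0 < ω := omegaB_pos hN1
  set c₁ : ℝ := 4 * N * 5 ^ (N - 1) with hc₁
  have hc₁0 : 0 ≤ c₁ := by positivity
  refine ⟨(1 + c₁) * ω + 1, by positivity, ?_⟩
  intro D hD E hE hPer hpos hfin hdiam
  set C₃ : ℝ := (1 + c₁) * ω + 1 with hC₃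
  set m : ℝ := (volume E).toReal with hm
  have hm0 : 0 < m := ENNReal.toReal_pos hpos.ne' hfin
  set r : ℝ := ballRad E with hr
  have hr0 : 0 ≤ r := ballRad_nonneg E
  have hrm : r ^ N * ω = m := ballRad_pow hN1 E hpos hfin
  have hrpos : 0 < r := by
    rcases hr0.lt_or_eq with h | h
    · exact h
    · exfalso; rw [← h, zero_pow (by omega), zero_mul] at hrm; exact hm0.ne' hrm.symm
  set d : ℝ := D * m ^ (1 / (N : ℝ)) with hddef
  have hd0 : 0 ≤ d := by positivity
  have hdiam' : essDiam E ≤ ENNReal.ofReal d := hdiam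
  -- rpow facts
  have hpowinv : ∀ x : ℝ, 0 ≤ x → (x ^ (1 / (N:ℝ))) ^ N = x := by
    intro x hx
    rw [← Real.rpow_natCast (x ^ (1 / (N:ℝ))) N, ← Real.rpow_mul hx, one_div,
      inv_mul_cancel₀ hNne, Real.rpow_one]
  set u : ℝ := D * ω ^ (1 / (N:ℝ)) with hu
  have huN : u ^ N = D ^ N * ω := by
    rw [hu, mul_pow, hpowinv ω hω0.le]
  have hdur : d = u * r := by
    have h1 : m ^ (1 / (N:ℝ)) = r * ω ^ (1 / (N:ℝ)) := by
      rw [← hrm, Real.mul_rpow (pow_nonneg hr0 N) hω0.le, ← Real.rpow_natCast r N,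
        ← Real.rpow_mul hr0, mul_one_div, div_self hNne, Real.rpow_one]
    rw [hddef, h1, hu]; ring
  -- lower bound on D^N ω
  have hvle := vol_le_diam_ball hN1 hE hpos hfin hd0 hdiam'
  have hdN : d ^ N = D ^ N * m := by
    rw [hddef, mul_pow, hpowinv m hm0.le]
  have hu1 : 1 ≤ D ^ N * ω := by
    rw [hdN] at hvle
    have : m * 1 ≤ m * (D ^ N * ω) := by nlinarith [hvle]
    exact le_of_mul_le_mul_left this hm0
  have huge1 : 1 ≤ u := by
    have hu0 : 0 ≤ u := by positivity
    by_contra h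
    push_neg at h
    have : u ^ N < 1 := pow_lt_one₀ hu0 h (by omega)
    rw [huN] at this; linarith
  -- the constant K₀ from lam0_le_y, and its bound K
  set K₀ : ℝ := 1 + 2*N*(d + r)*(r + 2*(d + r))^(N-1) * ω / m with hK₀
  have hK₀1 : 1 ≤ K₀ := by
    have h0 : (0:ℝ) ≤ 2*N*(d + r)*(r + 2*(d + r))^(N-1) * ω / m := by positivity
    rw [hK₀]
    linarith
  have hK₀K : K₀ ≤ 1 + c₁ * (D ^ N * ω) := by
    have h1 : d + r ≤ 2 * u * r := by rw [hdur]; nlinarith [hrpos.le, huge1]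
    have h2 : r + 2*(d + r) ≤ 5 * u * r := by rw [hdur]; nlinarith [hrpos.le, huge1]
    have h3 : (r + 2*(d+r))^(N-1) ≤ (5*u*r)^(N-1) :=
      pow_le_pow_left₀ (by positivity) h2 _
    have h4 : 2*N*(d + r)*(r + 2*(d + r))^(N-1) ≤ 2*N*(2*u*r)*(5*u*r)^(N-1) := by
      have hnn : (0:ℝ) ≤ 2*N*(d+r) := by positivity
      have h5 : 2*(N:ℝ)*(d+r) ≤ 2*N*(2*u*r) := by
        have : (0:ℝ) ≤ 2*(N:ℝ) := by positivity
        nlinarith [h1]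
      have hnn2 : (0:ℝ) ≤ (5*u*r)^(N-1) := by positivity
      calc 2*N*(d + r)*(r + 2*(d + r))^(N-1) ≤ 2*N*(d+r)*(5*u*r)^(N-1) :=
            mul_le_mul_of_nonneg_left h3 hnn
        _ ≤ 2*N*(2*u*r)*(5*u*r)^(N-1) := mul_le_mul_of_nonneg_right h5 hnn2
    have h6 : 2*(N:ℝ)*(2*u*r)*(5*u*r)^(N-1) = c₁ * (u^N * r^N) := by
      rw [hc₁, mul_pow, mul_pow]
      have hNsplit : ∀ a : ℝ, 0 ≤ a → a * a^(N-1) = a^N := by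
        intro a ha
        nth_rewrite 1 [← pow_one a]
        rw [← pow_add]
        congr 1
        omega
      rw [← hNsplit u (by positivity), ← hNsplit r hr0]
      push_cast
      ring
    have h7 : 2*N*(d + r)*(r + 2*(d + r))^(N-1) * ω / m ≤ c₁ * (D^N * ω) := by
      rw [div_le_iff₀ hm0]
      calc 2*N*(d + r)*(r + 2*(d + r))^(N-1) * ω ≤ c₁ * (u^N * r^N) * ω :=
            mul_le_mul_of_nonneg_right (h4.trans (le_of_eq h6)) hω0.le
        _ = c₁ * (D^N * ω) * m := by rw [huN, ← hrm]; ring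
    rw [hK₀]; linarith
  -- lam0 ≤ K₀ * fraenkel
  have hfr0 : 0 ≤ fraenkel E := by
    refine Real.iInf_nonneg fun y => ?_
    exact div_nonneg ENNReal.toReal_nonneg ENNReal.toReal_nonneg
  have hlamfr : lam0 E ≤ K₀ * fraenkel E := by
    by_contra hcon
    push_neg at hcon
    have hK₀pos : 0 < K₀ := lt_of_lt_of_le one_pos hK₀1
    set ε : ℝ := (lam0 E - K₀ * fraenkel E) / K₀ with hε
    have hεpos : 0 < ε := div_pos (by linarith) hK₀pos
    have : fraenkel E < fraenkel E + ε := by linarith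
    have this' : (⨅ y : En N, (volume (symmDiff E (Metric.ball y (ballRad E)))).toReal
        / (volume E).toReal) < fraenkel E + ε := this
    obtain ⟨y, hy⟩ := exists_lt_of_ciInf_lt this'
    have hkey := lam0_le_y hN1 hE hpos hfin hd0 hdiam' y
    rw [← hr, ← hm, ← hωdef, ← hK₀] at hkey
    have : lam0 E < K₀ * (fraenkel E + ε) := by
      refine hkey.trans_lt ?_
      exact (mul_lt_mul_of_pos_left hy hK₀pos)
    rw [hε] at this
    field_simp at this
    linarith
  -- use hQ
  have hQE := hQ E hE hPer hpos hfin
  have hCFs : 0 ≤ CF * Real.sqrt (deficit E) := le_trans hfr0 hQE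
  have step1 : lam0 E ≤ K₀ * (CF * Real.sqrt (deficit E)) :=
    hlamfr.trans (mul_le_mul_of_nonneg_left hQE (by linarith))
  have step2 : K₀ * (CF * Real.sqrt (deficit E))
      ≤ (2 ^ N * C₃ ^ N * 3 ^ (N * (N - 1) / 2) * D ^ N) * (CF * Real.sqrt (deficit E)) := by
    refine mul_le_mul_of_nonneg_right ?_ hCFs
    have hKle : K₀ ≤ (1 + c₁) * (D ^ N * ω) := by
      refine hK₀K.trans ?_
      nlinarith [hu1, hc₁0]
    refine hKle.trans ?_
    have hC₃1 : 1 ≤ C₃ := by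
      have h9 : 0 ≤ (1+c₁)*ω := mul_nonneg (by linarith) hω0.le
      rw [hC₃]; linarith
    have hC₃N : C₃ ≤ C₃ ^ N := le_self_pow₀ hC₃1 (by omega)
    have h2N : (1:ℝ) ≤ 2 ^ N := one_le_pow₀ (by norm_num)
    have h3N : (1:ℝ) ≤ 3 ^ (N * (N - 1) / 2) := one_le_pow₀ (by norm_num)
    have hDN : (0:ℝ) < D ^ N := by positivity
    have key : (1 + c₁) * ω ≤ C₃ := by rw [hC₃]; linarith
    calc (1 + c₁) * (D ^ N * ω) = ((1 + c₁) * ω) * D ^ N := by ring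
      _ ≤ C₃ * D ^ N := mul_le_mul_of_nonneg_right key hDN.le
      _ ≤ (2 ^ N * C₃ ^ N * 3 ^ (N * (N - 1) / 2)) * D ^ N := by
          refine mul_le_mul_of_nonneg_right ?_ hDN.le
          have hC₃N0 : (0:ℝ) ≤ C₃ ^ N := by positivity
          have hB : C₃ ^ N ≤ 2 ^ N * C₃ ^ N := le_mul_of_one_le_left hC₃N0 h2N
          have hC : 2 ^ N * C₃ ^ N ≤ 2 ^ N * C₃ ^ N * 3 ^ (N * (N - 1) / 2) :=
            le_mul_of_one_le_right (by positivity) h3N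
          linarith [hC₃N]
      _ = 2 ^ N * C₃ ^ N * 3 ^ (N * (N - 1) / 2) * D ^ N := by ring
  calc lam0 E ≤ K₀ * (CF * Real.sqrt (deficit E)) := step1
    _ ≤ (2 ^ N * C₃ ^ N * 3 ^ (N * (N - 1) / 2) * D ^ N) * (CF * Real.sqrt (deficit E)) := step2
    _ = 2 ^ N * CF * C₃ ^ N * 3 ^ (N * (N - 1) / 2) * D ^ N * Real.sqrt (deficit E) := by ring
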